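/- (No (1,2)-gaps) Fix g ≥ 2 and t, u ∈ ℕ with u ≥ 2t − 1. For every menu selection problem with g public goods, at least one of the following holds: (1) some singleton menu {j} is u-uncontestable, or (2) some two-element menu {i, j} is t-feasible. -/

import Mathlib

structure MenuProblem (N G : Type) where
  pref : N → List G
  nodup : ∀ i, (pref i).Nodup

namespace MenuProblem

variable {N G : Type} [Fintype N] [DecidableEq G]

/-- The good assigned to agent `i` when menu `O` is offered:
its favorite ranked good in `O`, if any. -/
def assigned (P : MenuProblem N G) (O : Finset G) (i : N) : Option G :=
  (P.pref i).find? (fun a => decide (a ∈ O))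

/-- Number of agents assigned to good `j` when menu `O` is offered. -/
def assignedCount (P : MenuProblem N G) (O : Finset G) (j : G) : ℕ :=
  (Finset.univ.filter (fun i => P.assigned O i = some j)).card

/-- The lobby for a good `j` against menu `O`: the number of agents that
would take `j` if it were added to the menu. -/
def lobby (P : MenuProblem N G) (O : Finset G) (j : G) : ℕ :=
  P.assignedCount (insert j O) j

/-- `|a ≻ b|`: the number of agents that would take `a` from the menu `{a, b}`. -/
def prefCount (P : MenuProblem N G) (a b : G) : ℕ :=
  P.assignedCount {a, b} a

/-- A menu is `t`-feasible if every offered good is assigned at least `t` agents. -/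
def TFeasible (P : MenuProblem N G) (O : Finset G) (t : ℕ) : Prop :=
  ∀ j ∈ O, t ≤ P.assignedCount O j

/-- A menu is `u`-uncontestable if no unoffered good has a lobby of at least `u` agents. -/
def UUncontestable (P : MenuProblem N G) (O : Finset G) (u : ℕ) : Prop :=
  ∀ j ∉ O, P.lobby O j < u

/-- A menu is `(t,u)`-stable if it is `t`-feasible and `u`-uncontestable. -/
def Stable (P : MenuProblem N G) (O : Finset G) (t u : ℕ) : Prop :=
  P.TFeasible O t ∧ P.UUncontestable O u

end MenuProblem


lemma agent_key {G : Type} [DecidableEq G] (a b k : G) (hab : a ≠ b) (hkb : k ≠ b)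
    (l : List G)
    (h1 : l.find? (fun x => decide (x ∈ ({a, b} : Finset G))) = some a)
    (h2 : l.find? (fun x => decide (x ∈ ({k, b} : Finset G))) ≠ some k) :
    l.find? (fun x => decide (x ∈ ({a, k} : Finset G))) = some a := by
  induction l with
  | nil => simp at h1
  | cons x xs ih =>
    by_cases hxa : x = a
    · subst hxa
      rw [List.find?_cons_of_pos (by simp)]
    · by_cases hxb : x = b
      · subst hxb
        rw [List.find?_cons_of_pos (by simp)] at h1
        simp at h1
        exact absurd h1.symm hab
      · by_cases hxk : x = k
        · subst hxk
          rw [List.find?_cons_of_pos (by simp)] at h2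
          simp at h2
        · rw [List.find?_cons_of_neg (by simp [hxa, hxb])] at h1
          rw [List.find?_cons_of_neg (by simp [hxk, hxb])] at h2
          rw [List.find?_cons_of_neg (by simp [hxa, hxk])]
          exact ih h1 h2

lemma count_key {N G : Type} [Fintype N] [DecidableEq G] (P : MenuProblem N G)
    {t u : ℕ} (htu : 2 * t - 1 ≤ u) (ht : 1 ≤ t)
    (a b k : G) (hab : a ≠ b) (hkb : k ≠ b)
    (h1 : u ≤ P.prefCount a b) (h2 : P.prefCount k b < t) :
    t ≤ P.prefCount a k := by
  classical
  set A := Finset.univ.filter (fun i => P.assigned {a, b} i = some a) with hA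
  set K := Finset.univ.filter (fun i => P.assigned {k, b} i = some k) with hK
  set C := Finset.univ.filter (fun i => P.assigned {a, k} i = some a) with hC
  have hsub : A \ K ⊆ C := by
    intro i hi
    rw [Finset.mem_sdiff, hA, hK, Finset.mem_filter, Finset.mem_filter] at hi
    rw [hC, Finset.mem_filter]
    refine ⟨Finset.mem_univ _, ?_⟩
    exact agent_key a b k hab hkb _ hi.1.2 (fun h => hi.2 ⟨Finset.mem_univ _, h⟩)
  have h3 : A.card - K.card ≤ (A \ K).card := Finset.le_card_sdiff K A
  have h4 : (A \ K).card ≤ C.card := Finset.card_le_card hsub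
  have hu : u ≤ A.card := h1
  have hk : K.card < t := h2
  have : t ≤ C.card := by omega
  exact this

/-- No (1,2)-gaps: for `g ≥ 2` and `u ≥ 2t − 1`, in every menu selection problem with `g`
goods, either some singleton menu is `u`-uncontestable, or some two-element menu is
`t`-feasible. -/
theorem no_one_two_gaps (g t u n : ℕ) (hg : 2 ≤ g) (htu : 2 * t - 1 ≤ u)
    (P : MenuProblem (Fin n) (Fin g)) :
    (∃ j : Fin g, P.UUncontestable {j} u) ∨
    (∃ i j : Fin g, i ≠ j ∧ P.TFeasible {i, j} t) := by
  classical
  rcases Nat.eq_zero_or_pos t with ht | ht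
  · right
    refine ⟨⟨0, by omega⟩, ⟨1, by omega⟩, by simp [Fin.ext_iff], ?_⟩
    intro j _; simp [ht]
  by_contra hcon
  push_neg at hcon
  obtain ⟨h1, h2⟩ := hcon
  -- From h1: for each j, some k ≠ j with u ≤ prefCount k j
  have hf : ∀ j : Fin g, ∃ k : Fin g, k ≠ j ∧ u ≤ P.prefCount k j := by
    intro j
    have := h1 j
    unfold MenuProblem.UUncontestable at this
    push_neg at this
    obtain ⟨k, hk1, hk2⟩ := this
    exact ⟨k, by simpa using hk1, hk2⟩
  choose f hfne hfu using hf
  -- From h2: not both directions ≥ t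
  have hnf : ∀ i j : Fin g, i ≠ j → t ≤ P.prefCount i j → P.prefCount j i < t := by
    intro i j hij hij2
    by_contra hc
    push_neg at hc
    refine h2 i j hij ?_
    intro x hx
    rcases Finset.mem_insert.mp hx with rfl | hx
    · exact hij2
    · rw [Finset.mem_singleton] at hx; subst hx
      rw [Finset.pair_comm]
      exact hc
  set x : ℕ → Fin g := fun m => f^[m] ⟨0, by omega⟩ with hx
  have hxs : ∀ m, x (m + 1) = f (x m) := by
    intro m; rw [hx]; simp [Function.iterate_succ_apply']
  have htle : t ≤ u := by omega
  -- key claim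
  have claim : ∀ nn mm, mm < nn → t ≤ P.prefCount (x nn) (x mm) := by
    intro nn
    induction nn with
    | zero => omega
    | succ n2 ih =>
      intro mm hmm
      rcases Nat.lt_succ_iff_lt_or_eq.mp hmm with hlt | rfl
      · by_cases heq : x mm = x n2
        · rw [heq, hxs]
          exact le_trans htle (hfu _)
        · have ha : t ≤ P.prefCount (x n2) (x mm) := ih mm hlt
          have hb : P.prefCount (x mm) (x n2) < t :=
            hnf _ _ (fun h => heq h.symm) ha
          rw [hxs]
          exact count_key P htu ht _ _ _ (hfne _) heq (hfu _) hb
      · rw [hxs]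
        exact le_trans htle (hfu _)
  -- pigeonhole
  have : ¬ Function.Injective (fun m : Fin (g + 1) => x m) := by
    intro hinj
    have := Fintype.card_le_of_injective _ hinj
    simp at this
  rw [Function.not_injective_iff] at this
  obtain ⟨i, j, hxij, hij⟩ := this
  -- wlog i < j as naturals
  rcases Nat.lt_or_ge (i : ℕ) (j : ℕ) with hlt | hge
  · have hd : (i : ℕ) + 1 < (j : ℕ) := by
      rcases Nat.lt_or_ge ((i : ℕ) + 1) (j : ℕ) with h | h
      · exact h
      · exfalso
        have : (j : ℕ) = (i : ℕ) + 1 := by omega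
        rw [this, hxs] at hxij
        exact hfne _ hxij.symm
    -- pair (x (j-1), x j)
    have hj1 : (j : ℕ) - 1 + 1 = (j : ℕ) := by omega
    have hne : x (j : ℕ) ≠ x ((j : ℕ) - 1) := by
      conv_lhs => rw [← hj1, hxs]
      exact hfne _
    have h5 : t ≤ P.prefCount (x (j : ℕ)) (x ((j : ℕ) - 1)) := claim _ _ (by omega)
    have h6 : t ≤ P.prefCount (x ((j : ℕ) - 1)) (x (j : ℕ)) := by
      rw [← hxij]
      exact claim _ _ (by omega)
    exact absurd h6 (Nat.not_le.mpr (hnf _ _ hne h5))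
  · have hlt : (j : ℕ) < (i : ℕ) := by
      rcases Nat.lt_or_ge (j : ℕ) (i : ℕ) with h | h
      · exact h
      · exfalso; exact hij (Fin.ext (by omega))
    have hd : (j : ℕ) + 1 < (i : ℕ) := by
      rcases Nat.lt_or_ge ((j : ℕ) + 1) (i : ℕ) with h | h
      · exact h
      · exfalso
        have : (i : ℕ) = (j : ℕ) + 1 := by omega
        rw [this, hxs] at hxij
        exact hfne _ hxij
    have hj1 : (i : ℕ) - 1 + 1 = (i : ℕ) := by omega
    have hne : x (i : ℕ) ≠ x ((i : ℕ) - 1) := by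
      conv_lhs => rw [← hj1, hxs]
      exact hfne _
    have h5 : t ≤ P.prefCount (x (i : ℕ)) (x ((i : ℕ) - 1)) := claim _ _ (by omega)
    have h6 : t ≤ P.prefCount (x ((i : ℕ) - 1)) (x (i : ℕ)) := by
      rw [hxij]
      exact claim _ _ (by omega)
    exact absurd h6 (Nat.not_le.mpr (hnf _ _ hne h5))
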